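/- arXiv:0909.4445 — 3 statements merged into one kernel-verified Lean document; each statement's English description precedes it below -/
import Mathlib

section
/- Let n be a positive integer and let P(x,y) be a real polynomial in two variables which is not identically zero and has total degree at most n. Let a be a positive integer, let ε > 0, and let r be a positive real number. Assume that there exists M such that P(x,y) = 0 for all integers x, y with x ≥ M, y ≥ M and 0 < a·y − r·x < ε. Then r is a rational number, and when r is written in lowest terms as r = u/v with v a positive integer and gcd(u,v) = 1, one has v ≤ a(n+1)/ε. -/
open Polynomial


/-- evaluating an `aeval` along an affine line. -/
lemma eval_aeval_line (P : MvPolynomial (Fin 2) ℝ) (c1 c2 s1 s2 t : ℝ) :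
    Polynomial.eval t (MvPolynomial.aeval
      ![Polynomial.C c1 + Polynomial.C s1 * Polynomial.X,
        Polynomial.C c2 + Polynomial.C s2 * Polynomial.X] P)
      = MvPolynomial.eval ![c1 + s1 * t, c2 + s2 * t] P := by
  induction P using MvPolynomial.induction_on with
  | C a => simp
  | add p q hp hq => simp [hp, hq]
  | mul_X p i hp => fin_cases i <;> simp [hp]

lemma natDegree_aeval_le (P : MvPolynomial (Fin 2) ℝ)
    (g : Fin 2 → Polynomial ℝ) (hg : ∀ i, (g i).natDegree ≤ 1) :
    (MvPolynomial.aeval g P : Polynomial ℝ).natDegree ≤ P.totalDegree := by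
  rw [MvPolynomial.aeval_def, MvPolynomial.eval₂_eq']
  refine Polynomial.natDegree_sum_le_of_forall_le _ _ ?_
  intro d hd
  calc (algebraMap ℝ ℝ[X] (MvPolynomial.coeff d P) * ∏ i, g i ^ d i).natDegree
      ≤ (∏ i, g i ^ d i).natDegree := by
        rw [Polynomial.algebraMap_eq]; exact Polynomial.natDegree_C_mul_le _ _
    _ ≤ ∑ i, (g i ^ d i).natDegree := Polynomial.natDegree_prod_le _ _
    _ ≤ ∑ i, d i * 1 := by
        refine Finset.sum_le_sum fun i _ => ?_
        exact Polynomial.natDegree_pow_le.trans (Nat.mul_le_mul_left _ (hg i))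
    _ = ∑ i, d i := by simp
    _ ≤ P.totalDegree := by
        rw [← Finsupp.sum_fintype d (fun _ e => e) (fun _ => rfl)]
        exact MvPolynomial.le_totalDegree hd


lemma line_natDegree (c s : ℝ) : (Polynomial.C c + Polynomial.C s * Polynomial.X : ℝ[X]).natDegree ≤ 1 := by
  refine (Polynomial.natDegree_add_le _ _).trans ?_
  refine max_le (by simp) (Polynomial.natDegree_mul_le.trans (by simp))

/-- a polynomial of total degree ≤ n vanishing on an affine (n+1)×(n+1) grid with
independent directions is zero. -/
lemma grid_vanish (n : ℕ) (P : MvPolynomial (Fin 2) ℝ) (hdeg : P.totalDegree ≤ n)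
    (x0 y0 q1 p1 q2 p2 : ℝ) (hdet : q1 * p2 - q2 * p1 ≠ 0)
    (hv : ∀ i j : ℕ, i ≤ n → j ≤ n →
      MvPolynomial.eval ![x0 + i * q1 + j * q2, y0 + i * p1 + j * p2] P = 0) :
    P = 0 := by
  have hinj : Function.Injective (fun i : Fin (n+1) => ((i : ℕ) : ℝ)) := by
    intro i j h
    exact Fin.ext (Nat.cast_injective h)
  have step1 : ∀ (t : ℝ) (j : ℕ), j ≤ n →
      MvPolynomial.eval ![(x0 + j * q2) + q1 * t, (y0 + j * p2) + p1 * t] P = 0 := by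
    intro t j hj
    have hF : (MvPolynomial.aeval
        ![Polynomial.C (x0 + j * q2) + Polynomial.C q1 * Polynomial.X,
          Polynomial.C (y0 + j * p2) + Polynomial.C p1 * Polynomial.X] P) = 0 := by
      apply Polynomial.eq_zero_of_natDegree_lt_card_of_eval_eq_zero _ hinj
      · intro i
        rw [eval_aeval_line]
        have hvec : (![(x0 + j*q2) + q1 * ((i:ℕ):ℝ), (y0 + j*p2) + p1 * ((i:ℕ):ℝ)] : Fin 2 → ℝ)
            = ![x0 + (i:ℕ) * q1 + j * q2, y0 + (i:ℕ) * p1 + j * p2] := by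
          funext u; fin_cases u <;> (simp; ring)
        rw [hvec]
        exact hv i j (Nat.le_of_lt_succ i.isLt) hj
      · calc (MvPolynomial.aeval _ P : ℝ[X]).natDegree ≤ P.totalDegree :=
              natDegree_aeval_le P _ (by intro u; fin_cases u <;> exact line_natDegree _ _)
          _ ≤ n := hdeg
          _ < Fintype.card (Fin (n+1)) := by simp
    have := eval_aeval_line P (x0 + j * q2) (y0 + j * p2) q1 p1 t
    rw [hF] at this
    simpa using this.symm
  have step2 : ∀ (t s : ℝ),
      MvPolynomial.eval ![(x0 + q1 * t) + q2 * s, (y0 + p1 * t) + p2 * s] P = 0 := by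
    intro t s
    have hG : (MvPolynomial.aeval
        ![Polynomial.C (x0 + q1 * t) + Polynomial.C q2 * Polynomial.X,
          Polynomial.C (y0 + p1 * t) + Polynomial.C p2 * Polynomial.X] P) = 0 := by
      apply Polynomial.eq_zero_of_natDegree_lt_card_of_eval_eq_zero _ hinj
      · intro j
        rw [eval_aeval_line]
        have hvec : (![(x0 + q1*t) + q2 * ((j:ℕ):ℝ), (y0 + p1*t) + p2 * ((j:ℕ):ℝ)] : Fin 2 → ℝ)
            = ![(x0 + (j:ℕ) * q2) + q1 * t, (y0 + (j:ℕ) * p2) + p1 * t] := by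
          funext u; fin_cases u <;> (simp; ring)
        rw [hvec]
        exact step1 t j (Nat.le_of_lt_succ j.isLt)
      · calc (MvPolynomial.aeval _ P : ℝ[X]).natDegree ≤ P.totalDegree :=
              natDegree_aeval_le P _ (by intro u; fin_cases u <;> exact line_natDegree _ _)
          _ ≤ n := hdeg
          _ < Fintype.card (Fin (n+1)) := by simp
    have := eval_aeval_line P (x0 + q1 * t) (y0 + p1 * t) q2 p2 s
    rw [hG] at this
    simpa using this.symm
  apply MvPolynomial.funext
  intro x
  set D := q1 * p2 - q2 * p1 with hD
  set t : ℝ := ((x 0 - x0) * p2 - (x 1 - y0) * q2) / D with ht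
  set s : ℝ := ((x 1 - y0) * q1 - (x 0 - x0) * p1) / D with hs
  have e1 : (x0 + q1 * t) + q2 * s = x 0 := by
    rw [ht, hs]; field_simp; ring
  have e2 : (y0 + p1 * t) + p2 * s = x 1 := by
    rw [ht, hs]; field_simp; ring
  have := step2 t s
  rw [e1, e2] at this
  have hx : (![x 0, x 1] : Fin 2 → ℝ) = x := by
    funext u; fin_cases u <;> rfl
  rw [hx] at this
  simpa using this

lemma base_point (a r M1 M2 : ℝ) (ha : 0 < a) (hr : 0 < r) (q1 p1 : ℤ)
    (hd1 : 0 < a * p1 - r * q1) :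
    ∃ x' y' : ℤ, M1 ≤ (x' : ℝ) ∧ M2 ≤ (y' : ℝ) ∧
      0 < a * y' - r * x' ∧ a * y' - r * x' ≤ a * p1 - r * q1 := by
  set δ1 : ℝ := a * p1 - r * q1 with hδ1
  have hKnn : 0 ≤ a / δ1 := le_of_lt (div_pos ha hd1)
  obtain ⟨m, hm⟩ := exists_nat_ge (max
    (M1 + (a/δ1) * |(q1:ℝ)|)
    ((a / r) * (M2 + (a/δ1) * |(p1:ℝ)| + 1)))
  have hmx : M1 + (a/δ1) * |(q1:ℝ)| ≤ (m : ℝ) := (le_max_left _ _).trans hm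
  have hmy : M2 + (a/δ1) * |(p1:ℝ)| + 1 ≤ r * m / a := by
    have h1 : (a / r) * (M2 + (a/δ1) * |(p1:ℝ)| + 1) ≤ (m : ℝ) := (le_max_right _ _).trans hm
    rw [le_div_iff₀ ha]
    have h2 : r * ((a / r) * (M2 + (a/δ1) * |(p1:ℝ)| + 1))
        = (M2 + (a/δ1) * |(p1:ℝ)| + 1) * a := by field_simp
    nlinarith [h1, hr]
  obtain ⟨y0, hy0gt, hy0le⟩ : ∃ y0 : ℤ, r * m / a < (y0 : ℝ) ∧ (y0 : ℝ) ≤ r * m / a + 1 := by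
    refine ⟨⌊r * m / a⌋ + 1, ?_, ?_⟩
    · push_cast; exact Int.lt_floor_add_one _
    · push_cast; linarith [Int.floor_le (r * m / a)]
  have hc0pos : 0 < a * y0 - r * m := by
    have := (div_lt_iff₀ ha).mp hy0gt
    nlinarith
  have hc0le : a * y0 - r * m ≤ a := by
    have h1 : a * (y0:ℝ) ≤ (r * m / a + 1) * a := by nlinarith
    have h2 : (r * m / a + 1) * a = r * m + a := by field_simp
    linarith
  set c0 : ℝ := a * y0 - r * m with hc0
  obtain ⟨k, hklt, hkge⟩ : ∃ k : ℕ, (k : ℝ) < c0 / δ1 ∧ c0 / δ1 ≤ (k : ℝ) + 1 := by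
    have hceil : (1 : ℤ) ≤ ⌈c0 / δ1⌉ := by
      exact_mod_cast Int.ceil_pos.mpr (div_pos hc0pos hd1)
    refine ⟨(⌈c0 / δ1⌉ - 1).toNat, ?_, ?_⟩
    · have hz : (((⌈c0 / δ1⌉ - 1).toNat : ℤ) : ℝ) = (⌈c0 / δ1⌉ : ℝ) - 1 := by
        rw [Int.toNat_of_nonneg (by linarith)]; push_cast; ring
      have hz' : (((⌈c0 / δ1⌉ - 1).toNat : ℕ) : ℝ) = (((⌈c0 / δ1⌉ - 1).toNat : ℤ) : ℝ) := by
        push_cast; rfl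
      rw [hz', hz]
      linarith [Int.ceil_lt_add_one (c0 / δ1)]
    · have hz : (((⌈c0 / δ1⌉ - 1).toNat : ℤ) : ℝ) = (⌈c0 / δ1⌉ : ℝ) - 1 := by
        rw [Int.toNat_of_nonneg (by linarith)]; push_cast; ring
      have hz' : (((⌈c0 / δ1⌉ - 1).toNat : ℕ) : ℝ) = (((⌈c0 / δ1⌉ - 1).toNat : ℤ) : ℝ) := by
        push_cast; rfl
      rw [hz', hz]
      linarith [Int.le_ceil (c0 / δ1)]
  have hk0 : (0:ℝ) ≤ (k:ℝ) := Nat.cast_nonneg k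
  have hkK : (k : ℝ) ≤ a / δ1 := by
    have h2 : c0 / δ1 ≤ a / δ1 := by gcongr
    linarith
  have hkq1 : (k:ℝ) * q1 ≤ (a/δ1) * |(q1:ℝ)| := by
    calc (k:ℝ) * q1 ≤ (k:ℝ) * |(q1:ℝ)| :=
          mul_le_mul_of_nonneg_left (le_abs_self _) hk0
      _ ≤ (a/δ1) * |(q1:ℝ)| := mul_le_mul_of_nonneg_right hkK (abs_nonneg _)
  have hkp1 : (k:ℝ) * p1 ≤ (a/δ1) * |(p1:ℝ)| := by
    calc (k:ℝ) * p1 ≤ (k:ℝ) * |(p1:ℝ)| :=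
          mul_le_mul_of_nonneg_left (le_abs_self _) hk0
      _ ≤ (a/δ1) * |(p1:ℝ)| := mul_le_mul_of_nonneg_right hkK (abs_nonneg _)
  have hval : a * ((y0:ℝ) - k * p1) - r * ((m:ℝ) - k * q1) = c0 - k * δ1 := by
    rw [hc0, hδ1]; ring
  have hc1 := (lt_div_iff₀ hd1).mp hklt
  have hc2 := (div_le_iff₀ hd1).mp hkge
  refine ⟨(m : ℤ) - k * q1, y0 - k * p1, ?_, ?_, ?_, ?_⟩
  · push_cast
    linarith [hmx, hkq1]
  · push_cast
    have hy0ge : M2 + (a/δ1) * |(p1:ℝ)| + 1 ≤ (y0:ℝ) := by linarith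
    linarith [hkp1]
  · push_cast
    push_cast at hval
    rw [hval]
    linarith
  · push_cast
    push_cast at hval
    rw [hval]
    linarith

lemma key (n : ℕ) (P : MvPolynomial (Fin 2) ℝ) (hdeg : P.totalDegree ≤ n)
    (a : ℕ) (ha : 0 < a) (ε : ℝ) (hε : 0 < ε) (r : ℝ) (hr : 0 < r) (M : ℝ)
    (hvan : ∀ x y : ℤ, M ≤ (x : ℝ) → M ≤ (y : ℝ) →
      0 < (a : ℝ) * (y : ℝ) - r * (x : ℝ) →
      (a : ℝ) * (y : ℝ) - r * (x : ℝ) < ε →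
      MvPolynomial.eval ![(x : ℝ), (y : ℝ)] P = 0)
    (q1 p1 q2 p2 : ℤ) (hdet : q1 * p2 - q2 * p1 ≠ 0)
    (hd1 : 0 < (a : ℝ) * p1 - r * q1) (hd2 : 0 ≤ (a : ℝ) * p2 - r * q2)
    (hsum : ((n : ℝ) + 1) * ((a : ℝ) * p1 - r * q1)
        + (n : ℝ) * ((a : ℝ) * p2 - r * q2) < ε) :
    P = 0 := by
  have hapos : (0 : ℝ) < a := by exact_mod_cast ha
  obtain ⟨x', y', hxge, hyge, hcpos, hcle⟩ := base_point (a : ℝ) r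
    (M + (n : ℝ) * (|(q1:ℝ)| + |(q2:ℝ)|)) (M + (n : ℝ) * (|(p1:ℝ)| + |(p2:ℝ)|))
    hapos hr q1 p1 hd1
  apply grid_vanish n P hdeg (x' : ℝ) (y' : ℝ) (q1 : ℝ) (p1 : ℝ) (q2 : ℝ) (p2 : ℝ)
  · have h0 : ((q1 * p2 - q2 * p1 : ℤ) : ℝ) ≠ 0 := Int.cast_ne_zero.mpr hdet
    push_cast at h0
    exact h0
  · intro i j hi hj
    have hi' : (i:ℝ) ≤ n := by exact_mod_cast hi
    have hj' : (j:ℝ) ≤ n := by exact_mod_cast hj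
    have hi0 : (0:ℝ) ≤ (i:ℝ) := Nat.cast_nonneg i
    have hj0 : (0:ℝ) ≤ (j:ℝ) := Nat.cast_nonneg j
    have hiq1 : -((n:ℝ) * |(q1:ℝ)|) ≤ (i:ℝ) * q1 := by
      have h1 : -((i:ℝ) * |(q1:ℝ)|) ≤ (i:ℝ) * q1 := by
        have := neg_abs_le (q1:ℝ)
        nlinarith [abs_nonneg (q1:ℝ)]
      have h2 : (i:ℝ) * |(q1:ℝ)| ≤ (n:ℝ) * |(q1:ℝ)| :=
        mul_le_mul_of_nonneg_right hi' (abs_nonneg _)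
      linarith
    have hjq2 : -((n:ℝ) * |(q2:ℝ)|) ≤ (j:ℝ) * q2 := by
      have h1 : -((j:ℝ) * |(q2:ℝ)|) ≤ (j:ℝ) * q2 := by
        have := neg_abs_le (q2:ℝ)
        nlinarith [abs_nonneg (q2:ℝ)]
      have h2 : (j:ℝ) * |(q2:ℝ)| ≤ (n:ℝ) * |(q2:ℝ)| :=
        mul_le_mul_of_nonneg_right hj' (abs_nonneg _)
      linarith
    have hip1 : -((n:ℝ) * |(p1:ℝ)|) ≤ (i:ℝ) * p1 := by
      have h1 : -((i:ℝ) * |(p1:ℝ)|) ≤ (i:ℝ) * p1 := by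
        have := neg_abs_le (p1:ℝ)
        nlinarith [abs_nonneg (p1:ℝ)]
      have h2 : (i:ℝ) * |(p1:ℝ)| ≤ (n:ℝ) * |(p1:ℝ)| :=
        mul_le_mul_of_nonneg_right hi' (abs_nonneg _)
      linarith
    have hjp2 : -((n:ℝ) * |(p2:ℝ)|) ≤ (j:ℝ) * p2 := by
      have h1 : -((j:ℝ) * |(p2:ℝ)|) ≤ (j:ℝ) * p2 := by
        have := neg_abs_le (p2:ℝ)
        nlinarith [abs_nonneg (p2:ℝ)]
      have h2 : (j:ℝ) * |(p2:ℝ)| ≤ (n:ℝ) * |(p2:ℝ)| :=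
        mul_le_mul_of_nonneg_right hj' (abs_nonneg _)
      linarith
    have hXM : M ≤ (x' : ℝ) + i * q1 + j * q2 := by linarith
    have hYM : M ≤ (y' : ℝ) + i * p1 + j * p2 := by linarith
    have hval : (a : ℝ) * ((y':ℝ) + i * p1 + j * p2) - r * ((x':ℝ) + i * q1 + j * q2)
        = ((a:ℝ) * y' - r * x') + i * ((a:ℝ) * p1 - r * q1) + j * ((a:ℝ) * p2 - r * q2) := by
      ring
    have hid1 : (0:ℝ) ≤ (i:ℝ) * ((a:ℝ) * p1 - r * q1) := by positivity
    have hjd2 : (0:ℝ) ≤ (j:ℝ) * ((a:ℝ) * p2 - r * q2) := mul_nonneg hj0 hd2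
    have hid1' : (i:ℝ) * ((a:ℝ) * p1 - r * q1) ≤ (n:ℝ) * ((a:ℝ) * p1 - r * q1) :=
      mul_le_mul_of_nonneg_right hi' hd1.le
    have hjd2' : (j:ℝ) * ((a:ℝ) * p2 - r * q2) ≤ (n:ℝ) * ((a:ℝ) * p2 - r * q2) :=
      mul_le_mul_of_nonneg_right hj' hd2
    have hlow : 0 < (a : ℝ) * ((y':ℝ) + i * p1 + j * p2) - r * ((x':ℝ) + i * q1 + j * q2) := by
      rw [hval]; linarith
    have hup : (a : ℝ) * ((y':ℝ) + i * p1 + j * p2) - r * ((x':ℝ) + i * q1 + j * q2) < ε := by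
      rw [hval]; linarith
    have hXc : ((x' + i * q1 + j * q2 : ℤ) : ℝ) = (x' : ℝ) + i * q1 + j * q2 := by push_cast; ring
    have hYc : ((y' + i * p1 + j * p2 : ℤ) : ℝ) = (y' : ℝ) + i * p1 + j * p2 := by push_cast; ring
    have := hvan (x' + i * q1 + j * q2) (y' + i * p1 + j * p2)
      (by rw [hXc]; exact hXM) (by rw [hYc]; exact hYM)
      (by rw [hXc, hYc]; exact hlow) (by rw [hXc, hYc]; exact hup)
    have hvec : (![((x' + i * q1 + j * q2 : ℤ):ℝ), ((y' + i * p1 + j * p2 : ℤ):ℝ)] : Fin 2 → ℝ)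
        = ![(x' : ℝ) + i * q1 + j * q2, (y' : ℝ) + i * p1 + j * p2] := by
      funext u; fin_cases u
      · simpa using hXc
      · simpa using hYc
    rw [hvec] at this
    exact this

lemma exists_dir (a : ℕ) (ha : 0 < a) (r : ℝ) (hirr : Irrational r)
    (η : ℝ) (hη : 0 < η) :
    ∃ q p : ℤ, q ≠ 0 ∧ 0 < (a : ℝ) * p - r * q ∧ (a : ℝ) * p - r * q < η := by
  obtain ⟨N, hN⟩ := exists_nat_gt ((a : ℝ) / η)
  have hapos : (0 : ℝ) < a := by exact_mod_cast ha
  have hNpos : 0 < N := by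
    rcases Nat.eq_zero_or_pos N with h | h
    · exfalso; rw [h] at hN; simp at hN
      nlinarith [div_pos hapos hη]
    · exact h
  obtain ⟨j, k, hk0, hkN, habs⟩ := Real.exists_int_int_abs_mul_sub_le (r / a) hNpos
  set δ : ℝ := (a : ℝ) * j - r * k with hδ
  have hkey : (k : ℝ) * (r / a) - j = -δ / a := by
    rw [hδ]; field_simp; ring
  have hδabs : |δ| ≤ (a : ℝ) / (N + 1) := by
    rw [hkey, abs_div, abs_neg, abs_of_pos hapos, div_le_div_iff₀ hapos (by positivity)] at habs
    rw [le_div_iff₀ (by positivity : (0:ℝ) < (N:ℝ) + 1)]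
    linarith
  have hδlt : |δ| < η := by
    refine hδabs.trans_lt ?_
    rw [div_lt_iff₀ (by positivity : (0:ℝ) < (N:ℝ) + 1)]
    rw [div_lt_iff₀ hη] at hN
    nlinarith
  have hδne : δ ≠ 0 := by
    intro h0
    have hkne : (k : ℝ) ≠ 0 := by
      exact_mod_cast hk0.ne'
    have : r = ((a : ℤ) * j / (k : ℤ) : ℚ) := by
      push_cast
      rw [eq_div_iff hkne]
      rw [hδ] at h0
      linarith
    exact hirr ⟨_, this.symm⟩
  rcases lt_or_gt_of_ne hδne with hneg | hpos
  · refine ⟨-k, -j, by simpa using hk0.ne', ?_, ?_⟩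
    · push_cast; rw [hδ] at hneg; nlinarith
    · push_cast
      have : |δ| = -δ := abs_of_neg hneg
      rw [this] at hδlt
      rw [hδ] at hδlt; nlinarith
  · refine ⟨k, j, hk0.ne', ?_, ?_⟩
    · rw [hδ] at hpos; linarith
    · have : |δ| = δ := abs_of_pos hpos
      rw [this, hδ] at hδlt; linarith

/-- **Rationality lemma** (Lemma 13.2, cf. Kollár–Mori Lemma 3.19).
If a non-trivial real polynomial `P` of total degree `≤ n` vanishes at all
sufficiently large integral points `(x, y)` with `0 < a·y − r·x < ε`, then
`r` is rational with denominator (in lowest terms) at most `a(n+1)/ε`. -/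
theorem rationality_lemma
    (n : ℕ) (hn : 0 < n) (P : MvPolynomial (Fin 2) ℝ) (hP : P ≠ 0)
    (hdeg : P.totalDegree ≤ n)
    (a : ℕ) (ha : 0 < a) (ε : ℝ) (hε : 0 < ε) (r : ℝ) (hr : 0 < r)
    (hvan : ∃ M : ℝ, ∀ x y : ℤ, M ≤ (x : ℝ) → M ≤ (y : ℝ) →
      0 < (a : ℝ) * (y : ℝ) - r * (x : ℝ) →
      (a : ℝ) * (y : ℝ) - r * (x : ℝ) < ε →
      MvPolynomial.eval ![(x : ℝ), (y : ℝ)] P = 0) :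
    ∃ (u : ℤ) (v : ℕ), 0 < v ∧ Nat.Coprime u.natAbs v ∧
      r = (u : ℝ) / (v : ℝ) ∧ (v : ℝ) ≤ (a : ℝ) * (n + 1) / ε := by
  obtain ⟨M, hvan⟩ := hvan
  have hapos : (0 : ℝ) < a := by exact_mod_cast ha
  by_cases hrat : ∃ q : ℚ, (q : ℝ) = r
  · obtain ⟨q, hq⟩ := hrat
    have hq0 : 0 < q := by
      have : (0 : ℝ) < (q : ℝ) := by rw [hq]; exact hr
      exact_mod_cast this
    set u : ℤ := q.num with hu
    set v : ℕ := q.den with hv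
    have hvpos : 0 < v := q.pos
    have hupos : 0 < u := Rat.num_pos.mpr hq0
    have hvR : (0:ℝ) < (v:ℝ) := by exact_mod_cast hvpos
    have hru : r = (u : ℝ) / (v : ℝ) := by
      rw [← hq, Rat.cast_def]
    refine ⟨u, v, hvpos, q.reduced, hru, ?_⟩
    by_contra hden
    push_neg at hden
    have hden' : (a : ℝ) * (n + 1) < ε * v := by
      rw [div_lt_iff₀ hε] at hden
      linarith
    -- Bezout data
    set D : ℤ := (Int.gcd ((a:ℤ) * v) u : ℤ) with hD
    have hDpos : 0 < D := by
      rw [hD]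
      have : Int.gcd ((a:ℤ) * v) u ≠ 0 := by
        simp only [ne_eq, Int.gcd_eq_zero_iff, not_and_or]
        left
        positivity
      exact_mod_cast Nat.pos_of_ne_zero this
    set p1 : ℤ := Int.gcdA ((a:ℤ) * v) u with hp1
    set q1 : ℤ := -Int.gcdB ((a:ℤ) * v) u with hq1
    have hbez : ((a:ℤ) * v) * p1 - u * q1 = D := by
      rw [hp1, hq1, hD, Int.gcd_eq_gcd_ab ((a:ℤ) * v) u]; ring
    have hDu : D ∣ u := Int.gcd_dvd_right _ _
    have hDav : D ∣ (a:ℤ) * v := Int.gcd_dvd_left _ _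
    obtain ⟨p2, hp2⟩ := hDu
    obtain ⟨q2, hq2⟩ := hDav
    -- real facts
    have hrv : r * v = (u : ℝ) := by
      rw [hru]; field_simp
    have hd1 : (a : ℝ) * p1 - r * q1 = (D : ℝ) / v := by
      rw [eq_div_iff (ne_of_gt hvR)]
      have : (((a:ℤ) * v) * p1 - u * q1 : ℤ) = (D : ℤ) := hbez
      have hcast := congrArg (fun z : ℤ => (z : ℝ)) this
      push_cast at hcast
      linear_combination hcast - (q1:ℝ) * hrv
    have hd1pos : 0 < (a : ℝ) * p1 - r * q1 := by
      rw [hd1]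
      positivity
    have hd2 : (a : ℝ) * p2 - r * q2 = 0 := by
      have hz : ((a:ℤ) * v) * p2 - u * q2 = 0 := by
        have h1 : D * (((a:ℤ) * v) * p2 - u * q2) = 0 := by
          calc D * (((a:ℤ) * v) * p2 - u * q2)
              = ((a:ℤ) * v) * (D * p2) - u * (D * q2) := by ring
            _ = ((a:ℤ) * v) * u - u * ((a:ℤ) * v) := by rw [← hp2, ← hq2]
            _ = 0 := by ring
        exact (mul_eq_zero.mp h1).resolve_left (ne_of_gt hDpos)
      have hcast := congrArg (fun z : ℤ => (z : ℝ)) hz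
      push_cast at hcast
      have : (v:ℝ) * ((a : ℝ) * p2 - r * q2) = 0 := by
        linear_combination hcast - (q2:ℝ) * hrv
      rcases mul_eq_zero.mp this with h | h
      · exact absurd h (ne_of_gt hvR)
      · exact h
    have hdet : q1 * p2 - q2 * p1 ≠ 0 := by
      have h1 : D * (q1 * p2 - q2 * p1) = -D := by
        calc D * (q1 * p2 - q2 * p1) = q1 * (D * p2) - (D * q2) * p1 := by ring
          _ = q1 * u - ((a:ℤ) * v) * p1 := by rw [← hp2, ← hq2]
          _ = -(((a:ℤ) * v) * p1 - u * q1) := by ring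
          _ = -D := by rw [hbez]
      intro h0
      rw [h0, mul_zero] at h1
      omega
    -- D ≤ a
    have hDlea : D ≤ (a : ℤ) := by
      have hDnat : Int.gcd ((a:ℤ) * v) u = Nat.gcd (v * a) u.natAbs := by
        rw [Int.gcd]
        congr 1
        simp [Int.natAbs_mul, Nat.mul_comm]
      have hcop' : Nat.Coprime v u.natAbs := (q.reduced).symm
      have : Nat.gcd (v * a) u.natAbs = Nat.gcd a u.natAbs :=
        Nat.Coprime.gcd_mul_left_cancel a hcop'
      have hle : Nat.gcd a u.natAbs ≤ a :=
        Nat.le_of_dvd ha (Nat.gcd_dvd_left _ _)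
      rw [hD, hDnat, this]
      exact_mod_cast hle
    have hsum : ((n : ℝ) + 1) * ((a : ℝ) * p1 - r * q1)
        + (n : ℝ) * ((a : ℝ) * p2 - r * q2) < ε := by
      rw [hd1, hd2]
      have hDR : (D : ℝ) ≤ (a : ℝ) := by exact_mod_cast hDlea
      have h1 : ((n : ℝ) + 1) * ((D : ℝ) / v) ≤ ((n : ℝ) + 1) * ((a:ℝ) / v) := by
        gcongr
      have h2 : ((n : ℝ) + 1) * ((a:ℝ) / v) < ε := by
        rw [mul_div_assoc', div_lt_iff₀ hvR]
        nlinarith [hden']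
      linarith
    exact absurd (key n P hdeg a ha ε hε r hr M hvan q1 p1 q2 p2 hdet hd1pos
      (le_of_eq hd2.symm) hsum) hP
  · -- irrational case
    exfalso
    have hirr : Irrational r := by
      intro ⟨q, hq⟩
      exact hrat ⟨q, hq⟩
    have hη1 : (0:ℝ) < ε / (2 * ((n:ℝ) + 1)) := by positivity
    obtain ⟨q1, p1, hq1ne, hd1pos, hd1lt⟩ := exists_dir a ha r hirr _ hη1
    set δ1 : ℝ := (a : ℝ) * p1 - r * q1 with hδ1
    have hη2 : (0:ℝ) < δ1 / (|(q1:ℝ)| + 1) := by positivity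
    obtain ⟨q2, p2, hq2ne, hd2pos, hd2lt⟩ := exists_dir a ha r hirr _ hη2
    set δ2 : ℝ := (a : ℝ) * p2 - r * q2 with hδ2
    have hdet : q1 * p2 - q2 * p1 ≠ 0 := by
      intro h0
      have h0R : (q1:ℝ) * p2 - (q2:ℝ) * p1 = 0 := by exact_mod_cast congrArg (fun z : ℤ => (z:ℝ)) h0
      have hrel : (q1:ℝ) * δ2 = (q2:ℝ) * δ1 := by
        rw [hδ1, hδ2]; nlinarith [h0R]
      have habs : |(q1:ℝ)| * δ2 = |(q2:ℝ)| * δ1 := by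
        have := congrArg abs hrel
        rwa [abs_mul, abs_mul, abs_of_pos hd2pos, abs_of_pos hd1pos] at this
      have hlt : |(q2:ℝ)| * δ1 < 1 * δ1 := by
        rw [← habs]
        calc |(q1:ℝ)| * δ2 ≤ |(q1:ℝ)| * (δ1 / (|(q1:ℝ)| + 1)) :=
              mul_le_mul_of_nonneg_left hd2lt.le (abs_nonneg _)
          _ < 1 * δ1 := by
              rw [one_mul, mul_div_assoc']
              rw [div_lt_iff₀ (by positivity : (0:ℝ) < |(q1:ℝ)| + 1)]
              nlinarith [abs_nonneg (q1:ℝ), hd1pos]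
      have : |(q2:ℝ)| < 1 := by
        have := lt_of_mul_lt_mul_right hlt hd1pos.le
        linarith
      have h1 : (1:ℝ) ≤ |(q2:ℝ)| := by
        have : (1:ℤ) ≤ |q2| := Int.one_le_abs hq2ne
        calc (1:ℝ) = ((1:ℤ):ℝ) := by norm_num
          _ ≤ ((|q2|:ℤ):ℝ) := by exact_mod_cast this
          _ = |(q2:ℝ)| := by push_cast; ring
      linarith
    have hδ2le : δ2 ≤ δ1 := by
      have : δ1 / (|(q1:ℝ)| + 1) ≤ δ1 := by
        apply div_le_self hd1pos.le
        linarith [abs_nonneg (q1:ℝ)]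
      linarith
    have hsum : ((n : ℝ) + 1) * δ1 + (n : ℝ) * δ2 < ε := by
      have hnn : (0:ℝ) ≤ (n:ℝ) := Nat.cast_nonneg n
      have h1 : ((n : ℝ) + 1) * δ1 + (n : ℝ) * δ2 ≤ (2 * (n:ℝ) + 1) * δ1 := by nlinarith
      have h2 : (2 * (n:ℝ) + 1) * δ1 < (2 * ((n:ℝ) + 1)) * (ε / (2 * ((n:ℝ) + 1))) := by
        have hfac : (0:ℝ) < 2 * ((n:ℝ) + 1) := by positivity
        nlinarith [hd1lt, hd1pos]
      have h3 : (2 * ((n:ℝ) + 1)) * (ε / (2 * ((n:ℝ) + 1))) = ε := by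
        field_simp
      rw [h3] at h2
      linarith
    exact hP (key n P hdeg a ha ε hε r hr M hvan q1 p1 q2 p2 hdet hd1pos hd2pos.le hsum)
end

section
/- Let n be a nonnegative integer and let P(X,Y) be a real polynomial in two variables of total degree at most n. Let (x′, y′) be a pair of real numbers with (x′, y′) ≠ (0, 0), and assume that P(k·x′, k·y′) = 0 for every integer k with 1 ≤ k ≤ n + 1. Then the linear polynomial y′·X − x′·Y divides P in the polynomial ring ℝ[X,Y]. -/
open MvPolynomial

lemma helper_dvd (c : ℝ) (P : MvPolynomial (Fin 2) ℝ)
    (h : ∀ t : ℝ, eval ![c * t, t] P = 0) : (X 0 - C c * X 1) ∣ P := by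
  set f := finSuccEquiv ℝ 1 P with hf
  have hroot : Polynomial.eval (C c * X 0 : MvPolynomial (Fin 1) ℝ) f = 0 := by
    apply MvPolynomial.funext
    intro s
    have hsa : eval s (C c * X 0 : MvPolynomial (Fin 1) ℝ) = c * s 0 := by simp
    have h1 : eval s (Polynomial.eval (C c * X 0 : MvPolynomial (Fin 1) ℝ) f)
        = Polynomial.eval (c * s 0) (Polynomial.map (eval s) f) := by
      rw [Polynomial.eval_map, ← hsa, Polynomial.eval₂_hom]
    rw [map_zero, h1, ← eval_eq_eval_mv_eval']
    have h2 : (Fin.cons (c * s 0) s : Fin 2 → ℝ) = ![c * s 0, s 0] := by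
      funext i
      refine Fin.cases rfl (fun j => ?_) i
      fin_cases j
      simp
    rw [h2]
    exact h (s 0)
  have hdvd : (Polynomial.X - Polynomial.C (C c * X 0)) ∣ f :=
    (Polynomial.dvd_iff_isRoot).mpr hroot
  have h2 : (finSuccEquiv ℝ 1) (X 1) = Polynomial.C (X 0) := by
    have h3 := finSuccEquiv_X_succ (R := ℝ) (n := 1) (j := 0)
    simpa using h3
  have h4 : (finSuccEquiv ℝ 1) (C c) = Polynomial.C (C c) := by
    simp [finSuccEquiv_apply]
  have he : (finSuccEquiv ℝ 1) (X 0 - C c * X 1 : MvPolynomial (Fin 2) ℝ)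
      = Polynomial.X - Polynomial.C (C c * X 0) := by
    rw [map_sub, map_mul, finSuccEquiv_X_zero, h4, h2, ← Polynomial.C_mul]
  have hsymm : (finSuccEquiv ℝ 1).symm (Polynomial.X - Polynomial.C (C c * X 0))
      = X 0 - C c * X 1 := by
    rw [← he, AlgEquiv.symm_apply_apply]
  have hmap := map_dvd (finSuccEquiv ℝ 1).symm.toRingEquiv hdvd
  simp only [AlgEquiv.toRingEquiv_eq_coe, AlgEquiv.coe_ringEquiv] at hmap
  rw [hsymm, hf, AlgEquiv.symm_apply_apply] at hmap
  exact hmap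

lemma helper_line (n : ℕ) (P : MvPolynomial (Fin 2) ℝ) (hdeg : P.totalDegree ≤ n)
    (x' y' : ℝ)
    (hvan : ∀ k : ℤ, 1 ≤ k → k ≤ (n : ℤ) + 1 →
      MvPolynomial.eval ![(k : ℝ) * x', (k : ℝ) * y'] P = 0) :
    ∀ t : ℝ, eval ![t * x', t * y'] P = 0 := by
  set q : Polynomial ℝ :=
    aeval (fun i => Polynomial.C (![x', y'] i) * Polynomial.X) P with hq
  have hqe : ∀ t : ℝ, q.eval t = eval ![t * x', t * y'] P := by
    intro t
    rw [hq, aeval_def,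
      show (Polynomial.eval t : Polynomial ℝ → ℝ) = Polynomial.evalRingHom t from rfl,
      eval₂_comp_left (Polynomial.evalRingHom t)]
    have hcomp : (Polynomial.evalRingHom t).comp (algebraMap ℝ (Polynomial ℝ))
        = RingHom.id ℝ := by
      ext x; simp [Polynomial.algebraMap_apply]
    have harg : (⇑(Polynomial.evalRingHom t) ∘
        fun i => Polynomial.C (![x', y'] i) * Polynomial.X) = ![t * x', t * y'] := by
      funext i
      fin_cases i <;>
        simp only [Fin.mk_zero, Fin.mk_one, Fin.isValue, Function.comp_apply,
          Matrix.cons_val_zero, Matrix.cons_val_one, Matrix.head_cons,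
          Polynomial.coe_evalRingHom, Polynomial.eval_mul,
          Polynomial.eval_C, Polynomial.eval_X] <;> ring
    rw [hcomp, harg, eval₂_id]
  have hq0 : q = 0 := by
    apply Polynomial.eq_zero_of_natDegree_lt_card_of_eval_eq_zero q
      (f := fun i : Fin (n + 1) => ((i : ℕ) + 1 : ℝ))
    · intro a b hab
      simp only at hab
      have : ((a : ℕ) : ℝ) = ((b : ℕ) : ℝ) := by linarith
      exact Fin.ext (Nat.cast_injective this)
    · intro i
      rw [hqe]
      have hk := hvan (((i : ℕ) : ℤ) + 1) (by omega)
        (by have := i.isLt; omega)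
      push_cast at hk ⊢
      exact hk
    · have hdq : q.natDegree ≤ n := by
        have hb := MvPolynomial.aeval_natDegree_le P hdeg
          (fun i => Polynomial.C (![x', y'] i) * Polynomial.X) (n := 1)
          (fun i => (Polynomial.natDegree_C_mul_le _ _).trans (by simp))
        simpa using hb
      simpa using Nat.lt_succ_of_le hdq
  intro t
  rw [← hqe, hq0, Polynomial.eval_zero]

/-- A real polynomial of total degree `≤ n` in two variables vanishing at the `n+1`
points `(k·x′, k·y′)`, `k = 1, …, n+1`, on the line through the origin and
`(x′, y′) ≠ (0,0)` is divisible by the linear form `y′·X − x′·Y`. -/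
theorem linear_form_dvd_of_vanishing
    (n : ℕ) (P : MvPolynomial (Fin 2) ℝ) (hdeg : P.totalDegree ≤ n)
    (x' y' : ℝ) (hxy : (x', y') ≠ (0, 0))
    (hvan : ∀ k : ℤ, 1 ≤ k → k ≤ (n : ℤ) + 1 →
      MvPolynomial.eval ![(k : ℝ) * x', (k : ℝ) * y'] P = 0) :
    (C y' * X 0 - C x' * X 1) ∣ P := by
  have hline := helper_line n P hdeg x' y' hvan
  rcases (by
    by_contra hc
    push_neg at hc
    exact hxy (by simp [hc.1, hc.2]) : x' ≠ 0 ∨ y' ≠ 0) with hx | hy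
  · -- x' ≠ 0
    set c := y' / x' with hc
    have h1 : (X 0 - C c * X 1) ∣ rename (Equiv.swap (0 : Fin 2) 1) P := by
      apply helper_dvd
      intro t
      rw [eval_rename]
      have harg : (![c * t, t] ∘ (Equiv.swap (0 : Fin 2) 1)) = ![t, c * t] := by
        funext i
        fin_cases i <;> simp [Equiv.swap_apply_def]
      rw [harg]
      have hl := hline (t / x')
      have e1 : t / x' * x' = t := by field_simp
      have e2 : t / x' * y' = c * t := by rw [hc]; ring
      rwa [e1, e2] at hl
    have h2 := map_dvd (rename (⇑(Equiv.swap (0 : Fin 2) 1)) :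
      MvPolynomial (Fin 2) ℝ →ₐ[ℝ] MvPolynomial (Fin 2) ℝ) h1
    have h3 : rename (⇑(Equiv.swap (0 : Fin 2) 1))
        (rename (⇑(Equiv.swap (0 : Fin 2) 1)) P) = P := by
      rw [rename_rename]
      have hid : (⇑(Equiv.swap (0 : Fin 2) 1) ∘ ⇑(Equiv.swap (0 : Fin 2) 1)) = id := by
        funext i
        simp [Equiv.swap_apply_self]
      rw [hid, rename_id, AlgHom.id_apply]
    have h4 : rename (⇑(Equiv.swap (0 : Fin 2) 1))
        (X 0 - C c * X 1 : MvPolynomial (Fin 2) ℝ) = X 1 - C c * X 0 := by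
      rw [map_sub, map_mul, rename_X, rename_X, rename_C, Equiv.swap_apply_left,
        Equiv.swap_apply_right]
    rw [h3, h4] at h2
    have hu : IsUnit (C (-x') : MvPolynomial (Fin 2) ℝ) :=
      (Ne.isUnit (neg_ne_zero.mpr hx)).map C
    have hcy : (C y' : MvPolynomial (Fin 2) ℝ) = C x' * C c := by
      rw [← C_mul, show x' * c = y' from by rw [hc]; field_simp]
    have heq : (C y' * X 0 - C x' * X 1 : MvPolynomial (Fin 2) ℝ)
        = C (-x') * (X 1 - C c * X 0) := by
      rw [hcy, C_neg]; ring
    rw [heq]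
    exact hu.mul_left_dvd.mpr h2
  · -- y' ≠ 0
    set c := x' / y' with hc
    have h1 : (X 0 - C c * X 1) ∣ P := by
      apply helper_dvd
      intro t
      have hl := hline (t / y')
      have e1 : t / y' * x' = c * t := by rw [hc]; ring
      have e2 : t / y' * y' = t := by field_simp
      rwa [e1, e2] at hl
    have hu : IsUnit (C y' : MvPolynomial (Fin 2) ℝ) := (Ne.isUnit hy).map C
    have hcx : (C x' : MvPolynomial (Fin 2) ℝ) = C y' * C c := by
      rw [← C_mul, show y' * c = x' from by rw [hc]; field_simp]
    have heq : (C y' * X 0 - C x' * X 1 : MvPolynomial (Fin 2) ℝ)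
        = C y' * (X 0 - C c * X 1) := by
      rw [hcx]; ring
    rw [heq]
    exact hu.mul_left_dvd.mpr h1
end

section
/- Let X be a locally connected topological space, let Z ⊆ X be a closed subset, and let F be a sheaf of abelian groups on X. Let F₁ and F₂ be sheaves of abelian groups on X equipped with monomorphisms φ₁ : F₁ → F and φ₂ : F₂ → F. Assume: (1) for every open set U ⊆ X with U ∩ Z = ∅, the map φ₂(U) : F₂(U) → F(U) is surjective; and (2) for every connected open set U ⊆ X with U ∩ Z ≠ ∅, F₁(U) = 0. Then for every open set U ⊆ X, the image of φ₁(U) : F₁(U) → F(U) is contained in the image of φ₂(U) : F₂(U) → F(U); that is, φ₁ factors through φ₂ as a morphism of sheaves. -/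
open CategoryTheory TopologicalSpace Opposite

/-- **Lemma 4.4** (cf. Kollár–Mori, Lemma 2.55). Let `X` be a locally connected
topological space, `Z ⊆ X` a closed subset and `F`, `F₁`, `F₂` sheaves of abelian
groups on `X` with monomorphisms `φ₁ : F₁ → F`, `φ₂ : F₂ → F`. If `φ₂` is surjective
on sections over every open set disjoint from `Z`, and `F₁(U) = 0` for every connected
open `U` meeting `Z`, then the image of `φ₁(U)` is contained in the image of `φ₂(U)`
for every open `U`; that is, `φ₁` factors through `φ₂` as a morphism of sheaves. -/
theorem subsheaf_of_subsheaf_of_vanishing_near_Z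
    (X : TopCat) [LocallyConnectedSpace X]
    (Z : Set X) (hZ : IsClosed Z)
    (F F₁ F₂ : TopCat.Sheaf AddCommGrpCat X)
    (φ₁ : F₁ ⟶ F) (φ₂ : F₂ ⟶ F) (hφ₁ : Mono φ₁) (hφ₂ : Mono φ₂)
    (h2 : ∀ U : Opens X, (U : Set X) ∩ Z = ∅ →
      Function.Surjective (φ₂.hom.app (op U)))
    (h1 : ∀ U : Opens X, IsConnected (U : Set X) → ((U : Set X) ∩ Z).Nonempty →
      ∀ s : F₁.val.obj (op U), s = 0) :
    (∀ U : Opens X,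
      Set.range (φ₁.hom.app (op U)) ⊆ Set.range (φ₂.hom.app (op U))) ∧
    ∃ ψ : F₁ ⟶ F₂, ψ ≫ φ₂ = φ₁ := by
  haveI := hφ₂
  haveI : Mono φ₂.hom := @Functor.map_mono _ _ _ _ (sheafToPresheaf _ _) _ _ _ φ₂ hφ₂
  have inj : ∀ W : (Opens X)ᵒᵖ, Function.Injective (φ₂.hom.app W) := by
    intro W
    haveI : Mono (φ₂.hom.app W) := by infer_instance
    exact (AddCommGrpCat.mono_iff_injective _).mp this
  have hrange : ∀ U : Opens X,
      Set.range (φ₁.hom.app (op U)) ⊆ Set.range (φ₂.hom.app (op U)) := by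
    intro U a ha
    obtain ⟨s, rfl⟩ := ha
    -- cover U by connected components
    set V : U → Opens X := fun x =>
      ⟨connectedComponentIn (U : Set X) x, U.isOpen.connectedComponentIn⟩ with hV
    have hVU : ∀ x : U, V x ≤ U := fun x => connectedComponentIn_subset _ _
    set f : ∀ x : U, V x ⟶ U := fun x => homOfLE (hVU x) with hf'
    have hVconn : ∀ x : U, IsConnected ((V x : Set X)) := fun x =>
      isConnected_connectedComponentIn_iff.mpr x.2
    have hcov : Sieve.ofArrows V f ∈ Opens.grothendieckTopology X U := by
      intro y hy
      exact ⟨V ⟨y, hy⟩, f ⟨y, hy⟩, Sieve.ofArrows_mk V f ⟨y, hy⟩,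
        mem_connectedComponentIn hy⟩
    -- a compatible family of lifts of `φ₁` restricted to the pieces of the cover
    have ex : ∀ i : U, ∃ xi : F₁.val.obj (op U) ⟶ F₂.val.obj (op (V i)),
        xi ≫ φ₂.hom.app (op (V i)) = φ₁.hom.app (op U) ≫ F.val.map (f i).op := by
      intro i
      by_cases hZx : ((V i : Set X) ∩ Z) = ∅
      · have surj := h2 (V i) hZx
        have hch : ∀ a : F₁.val.obj (op U), ∃ b : F₂.val.obj (op (V i)),
            φ₂.hom.app (op (V i)) b
              = F.val.map (f i).op (φ₁.hom.app (op U) a) := fun a => surj _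
        choose u hu using hch
        refine ⟨AddCommGrpCat.ofHom { toFun := u
                                      map_zero' := ?_
                                      map_add' := ?_ }, ?_⟩
        · apply inj
          rw [hu, map_zero, map_zero, map_zero]
        · intro a b
          apply inj
          rw [hu, map_add, map_add, map_add, hu, hu]
        · ext a
          show φ₂.hom.app (op (V i)) (u a) = F.val.map (f i).op (φ₁.hom.app (op U) a)
          exact hu a
      · refine ⟨0, ?_⟩
        ext a
        show φ₂.hom.app (op (V i)) 0 = F.val.map (f i).op (φ₁.hom.app (op U) a)
        have hz : F₁.val.map (f i).op a = 0 :=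
          h1 (V i) (hVconn i) (Set.nonempty_iff_ne_empty.mpr hZx) _
        have hnat := φ₁.hom.naturality (f i).op
        calc φ₂.hom.app (op (V i)) 0 = 0 := map_zero _
          _ = φ₁.hom.app (op (V i)) (F₁.val.map (f i).op a) := by
              rw [hz]; exact (map_zero _).symm
          _ = (F₁.val.map (f i).op ≫ φ₁.hom.app (op (V i))) a := rfl
          _ = (φ₁.hom.app (op U) ≫ F.val.map (f i).op) a := by rw [hnat]
          _ = F.val.map (f i).op (φ₁.hom.app (op U) a) := rfl
    choose x hx using ex
    have hcompat : ∀ ⦃W : Opens X⦄ ⦃i j : U⦄ (a : W ⟶ V i) (b : W ⟶ V j),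
        a ≫ f i = b ≫ f j →
        x i ≫ F₂.val.map a.op = x j ≫ F₂.val.map b.op := by
      intro W i j a b hab
      rw [← cancel_mono (φ₂.hom.app (op W)), Category.assoc, Category.assoc,
        φ₂.hom.naturality a.op, φ₂.hom.naturality b.op,
        ← Category.assoc, ← Category.assoc, hx i, hx j,
        Category.assoc, Category.assoc, ← F.val.map_comp, ← F.val.map_comp,
        ← op_comp, ← op_comp, hab]
    have hamalg := F₂.cond.existsUnique_amalgamation_ofArrows f hcov x hcompat
    obtain ⟨g, hg, -⟩ := hamalg
    have final : g ≫ φ₂.hom.app (op U) = φ₁.hom.app (op U) := by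
      apply F.cond.hom_ext_ofArrows f hcov
      intro i
      rw [Category.assoc, ← φ₂.hom.naturality (f i).op, ← Category.assoc, hg i, hx i]
    exact ⟨g s, by rw [← CategoryTheory.comp_apply, final]⟩
  refine ⟨hrange, ?_⟩
  have hψ : ∀ (W : Opens X) (s : F₁.val.obj (op W)),
      ∃ t, φ₂.hom.app (op W) t = φ₁.hom.app (op W) s := fun W s => hrange W ⟨s, rfl⟩
  choose g hg using hψ
  refine ⟨⟨{ app := fun W =>
             AddCommGrpCat.ofHom { toFun := fun s => g W.unop s
                                   map_zero' := ?_
                                   map_add' := ?_ }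
             naturality := ?_ }⟩, ?_⟩
  · apply inj (op (unop _))
    show φ₂.hom.app (op _) (g _ 0) = φ₂.hom.app (op _) 0
    rw [hg, map_zero, map_zero]
  · intro a b
    apply inj (op (unop _))
    show φ₂.hom.app (op _) (g _ (a + b)) = φ₂.hom.app (op _) (g _ a + g _ b)
    rw [hg, map_add, map_add, hg, hg]
  · intro W W' i
    ext s
    apply inj W'
    show φ₂.hom.app (op W'.unop) (g W'.unop (F₁.val.map i s))
      = φ₂.hom.app (op W'.unop) (F₂.val.map i (g W.unop s))
    have n2 : F₂.val.map i ≫ φ₂.hom.app W' = φ₂.hom.app W ≫ F.val.map i :=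
      φ₂.hom.naturality i
    have n1 : F₁.val.map i ≫ φ₁.hom.app W' = φ₁.hom.app W ≫ F.val.map i :=
      φ₁.hom.naturality i
    calc φ₂.hom.app (op W'.unop) (g W'.unop (F₁.val.map i s))
        = φ₁.hom.app W' (F₁.val.map i s) := hg _ _
      _ = (F₁.val.map i ≫ φ₁.hom.app W') s := rfl
      _ = (φ₁.hom.app W ≫ F.val.map i) s := by rw [n1]
      _ = F.val.map i (φ₁.hom.app W s) := rfl
      _ = F.val.map i (φ₂.hom.app W (g W.unop s)) := by rw [hg]
      _ = (φ₂.hom.app W ≫ F.val.map i) (g W.unop s) := rfl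
      _ = (F₂.val.map i ≫ φ₂.hom.app W') (g W.unop s) := by rw [n2]
      _ = φ₂.hom.app (op W'.unop) (F₂.val.map i (g W.unop s)) := rfl
  · apply Sheaf.hom_ext
    apply NatTrans.ext
    funext W
    ext s
    exact hg W.unop s
end
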